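/- arXiv:1703.02232 — 3 statements merged into one kernel-verified Lean document; each statement's English description precedes it below -/
import Mathlib

section
/- Let 0 < ν < 1 and 0 < b ≤ ∞. For every measurable function f and every x with 0 < x < b, the right-sided fractional Bessel integral of order 1 has the elementary form (B_{ν,b-}^{-1} f)(x) = (1/(ν−1)) ∫_x^b y ((x/y)^{1−ν} − 1) f(y) dy; in particular, for b = ∞, (B_{ν,-}^{-1} f)(x) = (1/(ν−1)) ∫_x^∞ y ((x/y)^{1−ν} − 1) f(y) dy. -/
open MeasureTheory Real Set Filter

/-- Gauss hypergeometric function ₂F₁(a,b;c;z) as a power series with Pochhammer coefficients. -/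
noncomputable def hyp2F1 (a b c z : ℝ) : ℝ :=
  ∑' k : ℕ, ((ascPochhammer ℝ k).eval a * (ascPochhammer ℝ k).eval b /
    ((ascPochhammer ℝ k).eval c * (k.factorial : ℝ))) * z ^ k

/-- Kernel of the right-sided fractional Bessel integral. -/
noncomputable def besselKernelRight (ν α x y : ℝ) : ℝ :=
  ((y ^ 2 - x ^ 2) / (2 * y)) ^ (2 * α - 1) *
    hyp2F1 (α + (ν - 1) / 2) α (2 * α) (1 - x ^ 2 / y ^ 2)

/-- Right-sided fractional Bessel integral B_{ν,b-}^{-α} f at x, for finite b. -/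
noncomputable def besselRight (ν α x b : ℝ) (f : ℝ → ℝ) : ℝ :=
  (1 / Real.Gamma (2 * α)) * ∫ y in x..b, besselKernelRight ν α x y * f y

/-- Right-sided fractional Bessel integral B_{ν,-}^{-α} f at x (b = ∞). -/
noncomputable def besselRightInf (ν α x : ℝ) (f : ℝ → ℝ) : ℝ :=
  (1 / Real.Gamma (2 * α)) * ∫ y in Set.Ioi x, besselKernelRight ν α x y * f y

/-- Kernel of the left-sided fractional Bessel integral. -/
noncomputable def besselKernelLeft (ν α x y : ℝ) : ℝ :=
  (y / x) ^ ν * ((x ^ 2 - y ^ 2) / (2 * x)) ^ (2 * α - 1) *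
    hyp2F1 (α + (ν - 1) / 2) α (2 * α) (1 - y ^ 2 / x ^ 2)

/-- Left-sided fractional Bessel integral B_{ν,a+}^{-α} f at x. -/
noncomputable def besselLeft (ν α a x : ℝ) (f : ℝ → ℝ) : ℝ :=
  (1 / Real.Gamma (2 * α)) * ∫ y in a..x, besselKernelLeft ν α x y * f y

private lemma pochCoeff_succ (s : ℝ) (k : ℕ) :
    (ascPochhammer ℝ (k+1)).eval s = (ascPochhammer ℝ k).eval s * (s + k) := by
  rw [ascPochhammer_succ_right]
  simp [Polynomial.eval_mul]

private lemma pochCoeff_abs_le_one {s : ℝ} (hs1 : -1 < s) (hs0 : s < 0) (k : ℕ) :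
    |(ascPochhammer ℝ k).eval s / (k.factorial : ℝ)| ≤ 1 := by
  induction k with
  | zero => simp
  | succ n ih =>
    have hfac : ((n.factorial : ℝ)) ≠ 0 := by positivity
    have : (ascPochhammer ℝ (n+1)).eval s / ((n+1).factorial : ℝ)
        = (ascPochhammer ℝ n).eval s / (n.factorial : ℝ) * ((s + n) / (n + 1)) := by
      rw [pochCoeff_succ, Nat.factorial_succ]
      push_cast
      field_simp
    rw [this, abs_mul]
    have h1 : |(s + n) / (n + 1)| ≤ 1 := by
      rw [abs_div, div_le_one (by positivity)]
      rw [abs_of_pos (by positivity : (0:ℝ) < (n:ℝ) + 1)]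
      rcases le_or_gt 0 (s + n) with h | h
      · rw [abs_of_nonneg h]; linarith
      · rw [abs_of_neg h]; linarith [Nat.cast_nonneg (α := ℝ) n]
    calc |(ascPochhammer ℝ n).eval s / (n.factorial : ℝ)| * |(s + n) / (n + 1)|
        ≤ 1 * 1 := by
          exact mul_le_mul ih h1 (abs_nonneg _) zero_le_one
      _ = 1 := by ring

private lemma binom_summable {s : ℝ} (hs1 : -1 < s) (hs0 : s < 0) {y : ℝ} (hy : |y| < 1) :
    Summable (fun k : ℕ => (ascPochhammer ℝ k).eval s / (k.factorial : ℝ) * y ^ k) := by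
  apply Summable.of_norm
  have hg : Summable (fun k : ℕ => |y| ^ k) :=
    summable_geometric_of_lt_one (abs_nonneg y) hy
  refine Summable.of_nonneg_of_le (fun k => norm_nonneg _) (fun k => ?_) hg
  rw [Real.norm_eq_abs, abs_mul, abs_pow]
  calc |(ascPochhammer ℝ k).eval s / (k.factorial : ℝ)| * |y| ^ k
      ≤ 1 * |y| ^ k :=
        mul_le_mul_of_nonneg_right (pochCoeff_abs_le_one hs1 hs0 k) (by positivity)
    _ = |y| ^ k := one_mul _

private lemma binom_hasSum {s : ℝ} (hs1 : -1 < s) (hs0 : s < 0) {z : ℝ} (hz0 : 0 ≤ z)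
    (hz1 : z < 1) :
    HasSum (fun k : ℕ => (ascPochhammer ℝ k).eval s / (k.factorial : ℝ) * z ^ k)
      ((1 - z) ^ (-s)) := by
  set c : ℕ → ℝ := fun k => (ascPochhammer ℝ k).eval s / (k.factorial : ℝ) with hc
  have hc0 : c 0 = 1 := by simp [hc]
  have hcrec : ∀ k : ℕ, c (k+1) * (k+1) = (s + k) * c k := by
    intro k
    have hfac : ((k.factorial : ℝ)) ≠ 0 := by positivity
    simp only [hc, pochCoeff_succ, Nat.factorial_succ]
    push_cast
    field_simp
  rcases eq_or_lt_of_le hz0 with hz | hz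
  · -- z = 0
    rw [← hz]
    have : (fun k : ℕ => c k * (0:ℝ) ^ k) = fun k => if k = 0 then 1 else 0 := by
      funext k
      cases k with
      | zero => simp [hc0]
      | succ n => simp
    rw [this, show ((1:ℝ) - 0) ^ (-s) = 1 by simp]
    exact hasSum_ite_eq 0 1
  -- z > 0
  set r : ℝ := (1 + z) / 2 with hr
  have hr0 : 0 < r := by rw [hr]; linarith
  have hr1 : r < 1 := by rw [hr]; linarith
  have hzr : z < r := by rw [hr]; linarith
  set t : Set ℝ := Ioo (-r) r with ht
  have hmem : ∀ y ∈ t, |y| < 1 := by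
    intro y hy
    rw [abs_lt]
    exact ⟨by linarith [hy.1, hr1], by linarith [hy.2, hr1]⟩
  set g : ℝ → ℝ := fun y => ∑' k : ℕ, c k * y ^ k with hg
  set D : ℝ → ℝ := fun y => ∑' k : ℕ, c k * ((k : ℝ) * y ^ (k - 1)) with hD
  set u : ℕ → ℝ := fun k => (1 / r) * ((k : ℝ) * r ^ k) with hu
  have hu_sum : Summable u := by
    have h := (summable_pow_mul_geometric_of_norm_lt_one (R := ℝ) 1
      (by rw [Real.norm_eq_abs, abs_of_pos hr0]; exact hr1)).mul_left (1 / r)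
    refine h.congr fun k => ?_
    rw [hu, pow_one]
  have hbound : ∀ k : ℕ, ∀ y ∈ t, ‖c k * ((k : ℝ) * y ^ (k - 1))‖ ≤ u k := by
    intro k y hy
    cases k with
    | zero => simp [hu]
    | succ n =>
      rw [Real.norm_eq_abs, abs_mul, abs_mul, abs_pow]
      have h1 : |c (n+1)| ≤ 1 := pochCoeff_abs_le_one hs1 hs0 (n+1)
      have h2 : |y| ≤ r := le_of_lt (abs_lt.mpr ⟨hy.1, hy.2⟩)
      have h3 : |y| ^ (n + 1 - 1) ≤ r ^ n := by
        simpa using pow_le_pow_left₀ (abs_nonneg y) h2 n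
      have habs : |((n:ℝ) + 1)| = (n:ℝ) + 1 := abs_of_pos (by positivity)
      calc |c (n+1)| * (|(((n:ℕ)+1 : ℕ) : ℝ)| * |y| ^ (n + 1 - 1))
          ≤ 1 * (((n:ℝ) + 1) * r ^ n) := by
            push_cast
            rw [habs]
            exact mul_le_mul h1 (mul_le_mul_of_nonneg_left h3 (by positivity))
              (by positivity) zero_le_one
        _ ≤ u (n+1) := by
            rw [hu]
            have : r ^ n = r ^ (n + 1) / r := by
              field_simp [pow_succ]
              ring
            rw [this]
            push_cast
            rw [one_mul]
            apply le_of_eq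
            field_simp
  have hsummable : ∀ y ∈ t, Summable fun k => c k * y ^ k := fun y hy =>
    binom_summable hs1 hs0 (hmem y hy)
  have hderiv : ∀ y ∈ t, HasDerivAt g (D y) y := by
    intro y hy
    exact hasDerivAt_tsum_of_isPreconnected hu_sum isOpen_Ioo
      (convex_Ioo _ _).isPreconnected
      (fun k y _ => (hasDerivAt_pow k y).const_mul (c k))
      hbound (by constructor <;> [linarith; exact hr0] : (0:ℝ) ∈ t)
      (hsummable 0 (by constructor <;> [linarith; exact hr0])) hy
  -- key functional identity (1 - y) * D y = s * g y on t
  have hkey : ∀ y ∈ t, (1 - y) * D y = s * g y := by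
    intro y hy
    have hDsum : HasSum (fun k : ℕ => c k * ((k : ℝ) * y ^ (k - 1))) (D y) := by
      apply Summable.hasSum
      exact Summable.of_norm (Summable.of_nonneg_of_le (fun k => norm_nonneg _)
        (fun k => hbound k y hy) hu_sum)
    have hshift : HasSum (fun k : ℕ => c (k+1) * (((k:ℝ)+1) * y ^ k)) (D y) := by
      have := (hasSum_nat_add_iff' (f := fun k : ℕ => c k * ((k : ℝ) * y ^ (k - 1))) 1).mpr hDsum
      simp only [Finset.range_one, Finset.sum_singleton, Nat.cast_zero, zero_mul, mul_zero,
        sub_zero, Nat.cast_add, Nat.cast_one] at this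
      convert this using 2 with k
      · rfl
      · rw [Nat.add_sub_cancel]
    have hterm : ∀ k : ℕ, c (k+1) * (((k:ℝ)+1) * y ^ k)
        = s * (c k * y ^ k) + y * (c k * ((k:ℝ) * y ^ (k - 1))) := by
      intro k
      have h1 : c (k+1) * ((k:ℝ)+1) = (s + k) * c k := by
        have := hcrec k; push_cast at this ⊢; linarith [this]
      have h2 : y * ((k:ℝ) * y ^ (k - 1)) = (k:ℝ) * y ^ k := by
        cases k with
        | zero => simp
        | succ n => simp [pow_succ]; ring
      calc c (k+1) * (((k:ℝ)+1) * y ^ k) = (c (k+1) * ((k:ℝ)+1)) * y ^ k := by ring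
        _ = ((s + k) * c k) * y ^ k := by rw [h1]
        _ = s * (c k * y ^ k) + c k * ((k:ℝ) * y ^ k) := by ring
        _ = s * (c k * y ^ k) + y * (c k * ((k:ℝ) * y ^ (k - 1))) := by
            rw [← h2]; ring
    have hgsum : HasSum (fun k : ℕ => c k * y ^ k) (g y) := (hsummable y hy).hasSum
    have hsum2 : HasSum (fun k : ℕ => s * (c k * y ^ k) + y * (c k * ((k:ℝ) * y ^ (k - 1))))
        (s * g y + y * D y) := (hgsum.mul_left s).add (hDsum.mul_left y)
    rw [show (fun k : ℕ => s * (c k * y ^ k) + y * (c k * ((k:ℝ) * y ^ (k - 1))))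
      = fun k : ℕ => c (k+1) * (((k:ℝ)+1) * y ^ k) from funext fun k => (hterm k).symm] at hsum2
    have := hshift.unique hsum2
    linarith [this]
  set h : ℝ → ℝ := fun y => (1 - y) ^ s * g y with hh
  have hhd : ∀ y ∈ t, HasDerivAt h 0 y := by
    intro y hy
    have h1y : 0 < 1 - y := by linarith [hy.2, hr1]
    have hbase : HasDerivAt (fun w : ℝ => 1 - w) (-1) y := by
      simpa using (hasDerivAt_id y).const_sub 1
    have hpow : HasDerivAt (fun w : ℝ => (1 - w) ^ s)
        (s * (1 - y) ^ (s - 1) * (-1)) y :=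
      (Real.hasDerivAt_rpow_const (Or.inl h1y.ne')).comp y hbase
    have hmul := hpow.mul (hderiv y hy)
    have hsplit : (1 - y) ^ s = (1 - y) ^ (s - 1) * (1 - y) := by
      rw [show s = (s - 1) + 1 by ring, Real.rpow_add h1y, Real.rpow_one]
      ring_nf
    have heq : s * (1 - y) ^ (s - 1) * (-1) * g y + (1 - y) ^ s * D y = 0 := by
      rw [hsplit]
      have := hkey y hy
      calc s * (1 - y) ^ (s - 1) * (-1) * g y + (1 - y) ^ (s - 1) * (1 - y) * D y
          = (1 - y) ^ (s - 1) * ((1 - y) * D y) - (1 - y) ^ (s - 1) * (s * g y) := by ring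
        _ = 0 := by rw [this]; ring
    rw [← heq]
    exact hmul
  have hIcc : Icc (0:ℝ) z ⊆ t := by
    intro w hw
    exact ⟨by linarith [hw.1], by linarith [hw.2]⟩
  have hconst := constant_of_has_deriv_right_zero
    (f := h) (a := 0) (b := z)
    (fun w hw => ((hhd w (hIcc hw)).continuousAt.continuousWithinAt))
    (fun w hw => (hhd w (hIcc (Ico_subset_Icc_self hw))).hasDerivWithinAt)
  have hzz := hconst z (right_mem_Icc.mpr hz0)
  have hg0 : g 0 = 1 := by
    have hgg : g 0 = ∑' k : ℕ, c k * (0:ℝ) ^ k := rfl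
    rw [hgg, tsum_eq_single 0 (fun b hb => by simp [zero_pow hb])]
    simp [hc0]
  have h0 : h 0 = 1 := by
    have hg1 : h 0 = (1 - 0:ℝ) ^ s * g 0 := rfl
    rw [hg1, hg0]
    simp [Real.one_rpow]
  have hzpos : 0 < 1 - z := by linarith
  have hgz : g z = (1 - z) ^ (-s) := by
    have h1 : (1 - z) ^ s * g z = 1 := by
      have hzh : h z = (1 - z) ^ s * g z := rfl
      rw [← hzh, hzz, h0]
    rw [Real.rpow_neg hzpos.le]
    exact eq_inv_of_mul_eq_one_left (by rw [mul_comm]; exact h1)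
  have hfin := (hsummable z ⟨by linarith, hzr⟩).hasSum
  have hgg : (∑' k : ℕ, c k * z ^ k) = g z := rfl
  rw [hgg, hgz] at hfin
  exact hfin

private lemma pochEval_two (k : ℕ) : (ascPochhammer ℝ k).eval (2:ℝ) = ((k+1).factorial : ℝ) := by
  induction k with
  | zero => simp
  | succ n ih =>
    rw [pochCoeff_succ, ih, show n + 1 + 1 = n + 2 from rfl, Nat.factorial_succ (n+1)]
    push_cast
    ring

private lemma pochEval_shift (s : ℝ) (k : ℕ) :
    (ascPochhammer ℝ (k+1)).eval s = s * (ascPochhammer ℝ k).eval (s + 1) := by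
  rw [ascPochhammer_succ_left]
  simp [Polynomial.eval_comp]

private lemma hyp2F1_eval {a z : ℝ} (ha0 : 0 < a) (ha1 : a < 1) (hz0 : 0 < z) (hz1 : z < 1) :
    hyp2F1 a 1 2 z = ((1 - z) ^ (1 - a) - 1) / ((a - 1) * z) := by
  have hb := binom_hasSum (s := a - 1) (by linarith) (by linarith) hz0.le hz1
  have hshift := (hasSum_nat_add_iff'
    (f := fun k : ℕ => (ascPochhammer ℝ k).eval (a-1) / (k.factorial : ℝ) * z ^ k) 1).mpr hb
  simp only [Finset.range_one, Finset.sum_singleton, ascPochhammer_zero, Polynomial.eval_one,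
    Nat.factorial_zero, Nat.cast_one, div_one, pow_zero, mul_one] at hshift
  have hexp : -(a - 1) = 1 - a := by ring
  rw [hexp] at hshift
  have hterm : (fun k : ℕ =>
        (ascPochhammer ℝ (k+1)).eval (a-1) / (((k+1).factorial : ℝ)) * z ^ (k+1))
      = fun k : ℕ => (((ascPochhammer ℝ k).eval a * (ascPochhammer ℝ k).eval 1 /
          ((ascPochhammer ℝ k).eval 2 * (k.factorial : ℝ))) * z ^ k) * ((a - 1) * z) := by
    funext k
    rw [pochEval_shift, show a - 1 + 1 = a by ring, ascPochhammer_eval_one, pochEval_two]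
    have h1 : ((k.factorial : ℝ)) ≠ 0 := by positivity
    have h2 : (((k+1).factorial : ℝ)) ≠ 0 := by positivity
    field_simp
    ring
  rw [hterm] at hshift
  have hne : (a - 1) * z ≠ 0 := mul_ne_zero (by intro h; linarith [h]; ) (ne_of_gt hz0)
  have hS : (1 - z) ^ (1 - a) - 1
      = (((1 - z) ^ (1 - a) - 1) / ((a - 1) * z)) * ((a - 1) * z) :=
    (div_mul_cancel₀ _ hne).symm
  rw [hS] at hshift
  have hfinal := (hasSum_mul_right_iff hne).mp hshift
  rw [hyp2F1]
  exact hfinal.tsum_eq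


private lemma kernel_eval {ν x y : ℝ} (hν0 : 0 < ν) (hν1 : ν < 1) (hx : 0 < x) (hxy : x ≤ y) :
    besselKernelRight ν 1 x y = 1 / (ν - 1) * (y * ((x / y) ^ (1 - ν) - 1)) := by
  have hy : 0 < y := lt_of_lt_of_le hx hxy
  rw [besselKernelRight, show 2 * (1:ℝ) - 1 = 1 by norm_num, Real.rpow_one,
    show (2:ℝ) * 1 = 2 by norm_num]
  rcases eq_or_lt_of_le hxy with heq | hlt
  · subst heq
    rw [sub_self, zero_div, zero_mul, div_self hx.ne', Real.one_rpow, sub_self,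
      mul_zero, mul_zero]
  · set z : ℝ := 1 - x ^ 2 / y ^ 2 with hzdef
    have hx2y2 : x ^ 2 < y ^ 2 := by nlinarith
    have hz0 : 0 < z := by
      rw [hzdef, sub_pos, div_lt_one (by positivity)]
      exact hx2y2
    have hz1 : z < 1 := by
      rw [hzdef]
      have : 0 < x ^ 2 / y ^ 2 := by positivity
      linarith
    have ha0 : 0 < 1 + (ν - 1) / 2 := by linarith
    have ha1 : 1 + (ν - 1) / 2 < 1 := by linarith
    rw [hyp2F1_eval ha0 ha1 hz0 hz1]
    have h1z : 1 - z = (x / y) ^ (2 : ℕ) := by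
      rw [hzdef]
      field_simp
      ring
    have hpow : (1 - z) ^ (1 - (1 + (ν - 1) / 2)) = (x / y) ^ (1 - ν) := by
      rw [h1z, ← Real.rpow_natCast (x / y) 2,
        ← Real.rpow_mul (div_nonneg hx.le hy.le)]
      norm_num
      congr 1
      ring
    rw [hpow]
    have hzz : z = (y ^ 2 - x ^ 2) / y ^ 2 := by
      rw [hzdef]
      field_simp
    rw [hzz]
    have hne1 : y ^ 2 - x ^ 2 ≠ 0 := by nlinarith
    have hne2 : ν - 1 ≠ 0 := by intro h; linarith
    field_simp
    ring_nf
    have hne3 : -1 + ν ≠ 0 := by intro h; linarith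
    field_simp
    ring

theorem statement7 (ν : ℝ) (hν : 0 < ν) (hν1 : ν < 1)
    (f : ℝ → ℝ) (hf : Measurable f) (x : ℝ) (hx : 0 < x) :
    (∀ b : ℝ, x < b →
      besselRight ν 1 x b f =
        1 / (ν - 1) * ∫ y in x..b, y * ((x / y) ^ (1 - ν) - 1) * f y) ∧
    besselRightInf ν 1 x f =
      1 / (ν - 1) * ∫ y in Set.Ioi x, y * ((x / y) ^ (1 - ν) - 1) * f y := by
  constructor
  · intro b hb
    rw [besselRight, show (2:ℝ) * 1 = 2 by norm_num, Real.Gamma_two,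
      show (1:ℝ) / 1 = 1 by norm_num, one_mul, ← intervalIntegral.integral_const_mul]
    apply intervalIntegral.integral_congr
    intro y hy
    rw [uIcc_of_le hb.le] at hy
    show besselKernelRight ν 1 x y * f y
      = 1 / (ν - 1) * (y * ((x / y) ^ (1 - ν) - 1) * f y)
    rw [kernel_eval hν hν1 hx hy.1]
    ring
  · rw [besselRightInf, show (2:ℝ) * 1 = 2 by norm_num, Real.Gamma_two,
      show (1:ℝ) / 1 = 1 by norm_num, one_mul, ← MeasureTheory.integral_const_mul]
    apply setIntegral_congr_fun measurableSet_Ioi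
    intro y hy
    show besselKernelRight ν 1 x y * f y
      = 1 / (ν - 1) * (y * ((x / y) ^ (1 - ν) - 1) * f y)
    rw [kernel_eval hν hν1 hx (le_of_lt hy)]
    ring
end

section
/- Let 0 < ν < 1 and 0 ≤ a < ∞. For every measurable function f and every x > a, the left-sided fractional Bessel integral of order 1 has the elementary form (B_{ν,a+}^{-1} f)(x) = (1/(ν−1)) ∫_a^x y (1 − (y/x)^{ν−1}) f(y) dy; in particular, for a = 0, (B_{ν,0+}^{-1} f)(x) = (1/(ν−1)) ∫_0^x y (1 − (y/x)^{ν−1}) f(y) dy. -/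
open MeasureTheory Real Set Filter

namespace BinAux

noncomputable def A (p : ℝ) (k : ℕ) : ℝ := (ascPochhammer ℝ k).eval p / k.factorial

lemma A_zero (p : ℝ) : A p 0 = 1 := by simp [A]

lemma A_succ (p : ℝ) (k : ℕ) : A p (k + 1) = A p k * (p + k) / (k + 1) := by
  have h1 : ((k.factorial : ℝ)) ≠ 0 := Nat.cast_ne_zero.2 k.factorial_ne_zero
  have h2 : ((k : ℝ) + 1) ≠ 0 := by positivity
  have h3 : (((k+1).factorial : ℝ)) = ((k:ℝ)+1) * k.factorial := by
    rw [Nat.factorial_succ]; push_cast; ring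
  rw [A, A, ascPochhammer_succ_eval, h3]
  push_cast
  rw [div_mul_eq_mul_div, div_div]
  ring_nf

lemma A_succ_mul (p : ℝ) (k : ℕ) : A p (k + 1) * ((k : ℝ) + 1) = A p k * (p + k) := by
  have h2 : ((k : ℝ) + 1) ≠ 0 := by positivity
  rw [A_succ]
  field_simp

lemma abs_A_le (p : ℝ) (hp : |p| ≤ 1) (k : ℕ) : |A p k| ≤ 1 := by
  induction k with
  | zero => simp [A_zero]
  | succ k ih =>
    have h2 : (0:ℝ) < (k : ℝ) + 1 := by positivity
    rw [A_succ, abs_div, abs_mul]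
    rw [abs_of_pos h2, div_le_one h2]
    have h3 : |p + (k:ℝ)| ≤ (k:ℝ) + 1 := by
      calc |p + (k:ℝ)| ≤ |p| + |(k:ℝ)| := abs_add_le _ _
        _ ≤ 1 + k := by
            have : |(k:ℝ)| = k := abs_of_nonneg (Nat.cast_nonneg k)
            linarith
        _ = (k:ℝ) + 1 := by ring
    calc |A p k| * |p + (k:ℝ)| ≤ 1 * ((k:ℝ) + 1) :=
          mul_le_mul ih h3 (abs_nonneg _) one_pos.le
      _ = (k:ℝ) + 1 := one_mul _

lemma summable_A (p : ℝ) (hp : |p| ≤ 1) {z : ℝ} (hz : |z| < 1) :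
    Summable (fun k : ℕ => A p k * z ^ k) := by
  apply Summable.of_norm_bounded (g := fun k : ℕ => |z| ^ k)
    (summable_geometric_of_lt_one (abs_nonneg z) hz)
  intro k
  rw [Real.norm_eq_abs, abs_mul, abs_pow]
  calc |A p k| * |z| ^ k ≤ 1 * |z| ^ k := by
        gcongr; exact abs_A_le p hp k
    _ = |z| ^ k := one_mul _

lemma summable_nat_mul_geom {r : ℝ} (h0 : 0 ≤ r) (h1 : r < 1) :
    Summable (fun n : ℕ => (n : ℝ) * r ^ (n - 1)) := by
  rw [← summable_nat_add_iff 1]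
  have h2 : Summable (fun n : ℕ => (n : ℝ) * r ^ n) := by
    simpa using summable_pow_mul_geometric_of_norm_lt_one 1
      (by rwa [Real.norm_eq_abs, abs_of_nonneg h0])
  have h3 : Summable (fun n : ℕ => r ^ n) := summable_geometric_of_lt_one h0 h1
  refine (h2.add h3).congr fun n => ?_
  have e : n + 1 - 1 = n := rfl
  rw [e]
  push_cast
  ring

lemma summable_A_mul (p : ℝ) (hp : |p| ≤ 1) {z : ℝ} (hz : |z| < 1) :
    Summable (fun k : ℕ => A p k * k * z ^ k) := by
  apply Summable.of_norm_bounded (g := fun k : ℕ => (k : ℝ) * |z| ^ k)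
  · simpa using summable_pow_mul_geometric_of_norm_lt_one 1
      (by rwa [Real.norm_eq_abs, abs_abs])
  intro k
  rw [Real.norm_eq_abs, abs_mul, abs_mul, abs_pow, Nat.abs_cast]
  calc |A p k| * (k:ℝ) * |z| ^ k ≤ 1 * (k:ℝ) * |z| ^ k := by
        gcongr; exact abs_A_le p hp k
    _ = (k:ℝ) * |z| ^ k := by ring

lemma summable_A_deriv (p : ℝ) (hp : |p| ≤ 1) {z : ℝ} (hz : |z| < 1) :
    Summable (fun n : ℕ => A p n * ((n : ℝ) * z ^ (n - 1))) := by
  apply Summable.of_norm_bounded (g := fun n : ℕ => (n : ℝ) * |z| ^ (n - 1))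
    (summable_nat_mul_geom (abs_nonneg z) hz)
  intro n
  rw [Real.norm_eq_abs, abs_mul, abs_mul, abs_pow, Nat.abs_cast]
  calc |A p n| * ((n:ℝ) * |z| ^ (n-1)) ≤ 1 * ((n:ℝ) * |z| ^ (n-1)) := by
        gcongr; exact abs_A_le p hp n
    _ = (n:ℝ) * |z| ^ (n-1) := one_mul _

noncomputable def S (p z : ℝ) : ℝ := ∑' k : ℕ, A p k * z ^ k

lemma S_zero (p : ℝ) : S p 0 = 1 := by
  rw [S, tsum_eq_single 0 (fun k hk => by simp [zero_pow hk])]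
  simp [A_zero]

lemma hasDerivAt_S (p : ℝ) (hp : |p| ≤ 1) {z : ℝ} (hz : |z| < 1) :
    HasDerivAt (S p) (∑' k : ℕ, A p (k + 1) * ((k : ℝ) + 1) * z ^ k) z := by
  set r : ℝ := (1 + |z|) / 2 with hr
  have hr0 : 0 ≤ r := by positivity
  have hr1 : r < 1 := by rw [hr]; linarith
  have hzr : |z| < r := by rw [hr]; linarith
  have hzmem : z ∈ Metric.ball (0:ℝ) r := by
    rwa [mem_ball_zero_iff, Real.norm_eq_abs]
  have hbound : ∀ (n : ℕ) (y : ℝ), y ∈ Metric.ball (0:ℝ) r →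
      ‖A p n * ((n : ℝ) * y ^ (n - 1))‖ ≤ (n : ℝ) * r ^ (n - 1) := by
    intro n y hy
    rw [mem_ball_zero_iff, Real.norm_eq_abs] at hy
    rw [Real.norm_eq_abs, abs_mul, abs_mul, abs_pow, Nat.abs_cast]
    have hA1 : |A p n| ≤ 1 := abs_A_le p hp n
    have hy1 : |y| ^ (n-1) ≤ r ^ (n-1) := pow_le_pow_left₀ (abs_nonneg y) hy.le _
    calc |A p n| * ((n:ℝ) * |y| ^ (n-1)) ≤ 1 * ((n:ℝ) * r ^ (n-1)) :=
          mul_le_mul hA1 (mul_le_mul_of_nonneg_left hy1 (Nat.cast_nonneg n))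
            (by positivity) one_pos.le
      _ = (n:ℝ) * r ^ (n-1) := one_mul _
  have key : HasDerivAt (fun w : ℝ => ∑' n : ℕ, A p n * w ^ n)
      (∑' n : ℕ, A p n * ((n : ℝ) * z ^ (n - 1))) z :=
    hasDerivAt_tsum_of_isPreconnected
      (u := fun n : ℕ => (n : ℝ) * r ^ (n - 1))
      (g' := fun (n : ℕ) (y : ℝ) => A p n * ((n : ℝ) * y ^ (n - 1)))
      (summable_nat_mul_geom hr0 hr1) Metric.isOpen_ball
      (convex_ball (0:ℝ) r).isPreconnected
      (fun n y _ => (hasDerivAt_pow n y).const_mul (A p n))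
      hbound hzmem (summable_A p hp hz) hzmem
  have heq : (∑' n : ℕ, A p n * ((n : ℝ) * z ^ (n - 1)))
      = ∑' k : ℕ, A p (k + 1) * ((k : ℝ) + 1) * z ^ k := by
    rw [Summable.tsum_eq_zero_add (summable_A_deriv p hp hz)]
    simp only [Nat.cast_zero, zero_mul, mul_zero, zero_add]
    refine tsum_congr fun k => ?_
    have e : k + 1 - 1 = k := rfl
    rw [e]
    push_cast
    ring
  rw [heq] at key
  exact key

lemma S_ode (p : ℝ) (hp : |p| ≤ 1) {z : ℝ} (hz : |z| < 1) :
    (1 - z) * (∑' k : ℕ, A p (k + 1) * ((k : ℝ) + 1) * z ^ k) = p * S p z := by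
  have s1 : Summable (fun k : ℕ => A p k * z ^ k) := summable_A p hp hz
  have s2 : Summable (fun k : ℕ => A p k * k * z ^ k) := summable_A_mul p hp hz
  have hD : (∑' k : ℕ, A p (k + 1) * ((k : ℝ) + 1) * z ^ k)
      = p * S p z + ∑' k : ℕ, A p k * k * z ^ k := by
    have hterm : ∀ k : ℕ, A p (k + 1) * ((k : ℝ) + 1) * z ^ k
        = p * (A p k * z ^ k) + A p k * k * z ^ k := by
      intro k
      have h := A_succ_mul p k
      calc A p (k + 1) * ((k : ℝ) + 1) * z ^ k = (A p (k+1) * ((k:ℝ)+1)) * z ^ k := by ring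
        _ = (A p k * (p + k)) * z ^ k := by rw [h]
        _ = p * (A p k * z ^ k) + A p k * k * z ^ k := by ring
    rw [tsum_congr hterm, Summable.tsum_add (s1.mul_left p) s2, tsum_mul_left, S]
  have hT : (∑' k : ℕ, A p k * k * z ^ k)
      = z * ∑' k : ℕ, A p (k + 1) * ((k : ℝ) + 1) * z ^ k := by
    rw [Summable.tsum_eq_zero_add s2]
    simp only [Nat.cast_zero, mul_zero, zero_mul, zero_add]
    rw [← tsum_mul_left]
    refine tsum_congr fun k => ?_
    push_cast
    ring
  linear_combination hD + hT

lemma S_mul_rpow (p : ℝ) (hp : |p| ≤ 1) {z : ℝ} (h0 : 0 ≤ z) (h1 : z < 1) :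
    S p z * (1 - z) ^ p = 1 := by
  have hderiv : ∀ t : ℝ, |t| < 1 → HasDerivAt (fun u => S p u * (1 - u) ^ p) 0 t := by
    intro t ht
    have hb : (0:ℝ) < 1 - t := by
      have := abs_lt.1 ht
      linarith [this.2]
    have hS := hasDerivAt_S p hp ht
    have h3 : HasDerivAt (fun u : ℝ => 1 - u) (-1) t := (hasDerivAt_id t).const_sub 1
    have h2 : HasDerivAt (fun u : ℝ => (1 - u) ^ p) (-(p * (1 - t) ^ (p - 1))) t := by
      have h4 := (Real.hasDerivAt_rpow_const (x := 1 - t) (p := p) (Or.inl hb.ne'))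
      have := h4.comp t h3
      simpa [mul_comm, Function.comp_def] using this
    have hprod := hS.mul h2
    have hode := S_ode p hp ht
    have hsplit : (1 - t) ^ p = (1 - t) ^ (p - 1) * (1 - t) := by
      have := Real.rpow_add hb (p - 1) 1
      simpa using this
    have hzero : (∑' k : ℕ, A p (k + 1) * ((k : ℝ) + 1) * t ^ k) * (1 - t) ^ p
        + S p t * -(p * (1 - t) ^ (p - 1)) = 0 := by
      rw [hsplit]
      linear_combination (1 - t) ^ (p - 1) * hode
    rwa [hzero] at hprod
  have hconst : ∀ w ∈ Icc (0:ℝ) z, S p w * (1 - w) ^ p = S p 0 * (1 - 0) ^ p := by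
    apply constant_of_has_deriv_right_zero
    · intro w hw
      have hw1 : |w| < 1 := by
        rw [abs_lt]; constructor <;> [linarith [hw.1]; linarith [hw.2]]
      exact (hderiv w hw1).continuousAt.continuousWithinAt
    · intro w hw
      have hw1 : |w| < 1 := by
        rw [abs_lt]; constructor <;> [linarith [hw.1]; linarith [hw.2]]
      exact (hderiv w hw1).hasDerivWithinAt
  have := hconst z ⟨h0, le_refl z⟩
  rw [S_zero] at this
  simpa using this

lemma S_eq_rpow (p : ℝ) (hp : |p| ≤ 1) {z : ℝ} (h0 : 0 ≤ z) (h1 : z < 1) :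
    S p z = (1 - z) ^ (-p) := by
  have hb : (0:ℝ) < 1 - z := by linarith
  have h4 := S_mul_rpow p hp h0 h1
  have hcne : (1 - z) ^ p ≠ 0 := (Real.rpow_pos_of_pos hb p).ne'
  rw [Real.rpow_neg hb.le]
  field_simp
  linarith [h4]

lemma asc_eval_one (k : ℕ) : (ascPochhammer ℝ k).eval 1 = k.factorial := by
  induction k with
  | zero => simp
  | succ k ih =>
    rw [ascPochhammer_succ_eval, ih, Nat.factorial_succ]
    push_cast
    ring

lemma asc_eval_two (k : ℕ) : (ascPochhammer ℝ k).eval 2 = (k + 1).factorial := by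
  induction k with
  | zero => simp
  | succ k ih =>
    rw [ascPochhammer_succ_eval, ih, Nat.factorial_succ (k + 1)]
    push_cast
    ring

lemma asc_eval_succ_left (p : ℝ) (k : ℕ) :
    (ascPochhammer ℝ (k + 1)).eval p = p * (ascPochhammer ℝ k).eval (p + 1) := by
  rw [ascPochhammer_succ_left]
  simp [Polynomial.eval_comp]

lemma hyp2F1_eval (p : ℝ) (hp : |p| ≤ 1) (hp0 : p ≠ 0) {z : ℝ} (h0 : 0 < z) (h1 : z < 1) :
    hyp2F1 (p + 1) 1 2 z = ((1 - z) ^ (-p) - 1) / (p * z) := by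
  have hzabs : |z| < 1 := by rw [abs_of_pos h0]; exact h1
  have hterm : ∀ k : ℕ,
      ((ascPochhammer ℝ k).eval (p + 1) * (ascPochhammer ℝ k).eval 1 /
        ((ascPochhammer ℝ k).eval 2 * (k.factorial : ℝ))) * z ^ k
      = (1 / p) * (A p (k + 1) * z ^ k) := by
    intro k
    have hf1 : ((k.factorial : ℝ)) ≠ 0 := Nat.cast_ne_zero.2 k.factorial_ne_zero
    have hf2 : (((k+1).factorial : ℝ)) ≠ 0 := Nat.cast_ne_zero.2 (k+1).factorial_ne_zero
    rw [asc_eval_one, asc_eval_two, A, asc_eval_succ_left]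
    field_simp
  rw [hyp2F1, tsum_congr hterm, tsum_mul_left]
  have hsum := summable_A p hp hzabs
  have h2 : z * ∑' k : ℕ, A p (k + 1) * z ^ k = S p z - 1 := by
    have hdecomp := Summable.tsum_eq_zero_add hsum
    rw [← tsum_mul_left]
    have : (∑' k : ℕ, z * (A p (k + 1) * z ^ k)) = ∑' k : ℕ, A p (k + 1) * z ^ (k + 1) :=
      tsum_congr fun k => by ring
    rw [this]
    rw [A_zero, pow_zero, mul_one] at hdecomp
    rw [S]
    linarith [hdecomp]
  have h3 := S_eq_rpow p hp h0.le h1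
  have hsum2 : (∑' k : ℕ, A p (k + 1) * z ^ k) = ((1 - z) ^ (-p) - 1) / z := by
    rw [← h3]
    field_simp
    linarith [h2]
  rw [hsum2]
  field_simp

end BinAux

lemma kernel_eq (ν x y : ℝ) (hν : 0 < ν) (hν1 : ν < 1) (hx0 : 0 < x) (hy0 : 0 ≤ y)
    (hyx : y ≤ x) :
    besselKernelLeft ν 1 x y = 1 / (ν - 1) * (y * (1 - (y / x) ^ (ν - 1))) := by
  have hxne : x ≠ 0 := hx0.ne'
  have hexp : 2 * (1:ℝ) - 1 = 1 := by norm_num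
  rcases eq_or_lt_of_le hyx with rfl | hlt
  · rw [besselKernelLeft, hexp, Real.rpow_one, div_self hxne, Real.one_rpow]
    simp
  rcases eq_or_lt_of_le hy0 with rfl | hy0'
  · rw [besselKernelLeft, zero_div, Real.zero_rpow hν.ne']
    simp
  · have hw : 0 < y / x := div_pos hy0' hx0
    have hy2 : y ^ 2 < x ^ 2 := by nlinarith
    have hx2 : (0:ℝ) < x ^ 2 := by positivity
    have hz0 : 0 < 1 - y ^ 2 / x ^ 2 := by
      rw [sub_pos, div_lt_one hx2]; exact hy2
    have hz1 : 1 - y ^ 2 / x ^ 2 < 1 := by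
      have : 0 < y ^ 2 / x ^ 2 := by positivity
      linarith
    have hne1 : ν - 1 ≠ 0 := sub_ne_zero.2 hν1.ne
    have hp0 : (ν - 1) / 2 ≠ 0 := div_ne_zero hne1 two_ne_zero
    have hpabs : |(ν - 1) / 2| ≤ 1 := abs_le.mpr ⟨by linarith, by linarith⟩
    rw [besselKernelLeft, hexp, Real.rpow_one,
      show (1:ℝ) + (ν - 1) / 2 = (ν - 1) / 2 + 1 by ring,
      show (2:ℝ) * 1 = 2 by norm_num,
      BinAux.hyp2F1_eval ((ν - 1) / 2) hpabs hp0 hz0 hz1]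
    have hrp : (1 - (1 - y ^ 2 / x ^ 2)) ^ (-((ν - 1) / 2)) = (y / x) ^ (1 - ν) := by
      have e1 : 1 - (1 - y ^ 2 / x ^ 2) = (y / x) ^ (2:ℕ) := by
        rw [div_pow]; ring
      rw [e1, ← Real.rpow_natCast (y / x) 2, ← Real.rpow_mul hw.le]
      congr 1
      push_cast
      ring
    rw [hrp]
    have e2 : (y / x) ^ ν * (y / x) ^ (1 - ν) = y / x := by
      rw [← Real.rpow_add hw]; norm_num
    have e3 : (y / x) ^ (ν - 1) * (y / x) = (y / x) ^ ν := by
      rw [← Real.rpow_add_one hw.ne']; congr 1; ring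
    have e2' : (y / x) ^ ν * (y / x) ^ (1 - ν) * x = y := by
      rw [e2]; field_simp
    have e3' : (y / x) ^ (ν - 1) * y = (y / x) ^ ν * x := by
      calc (y / x) ^ (ν - 1) * y = (y / x) ^ (ν - 1) * ((y / x) * x) := by
            rw [div_mul_cancel₀ y hxne]
        _ = ((y / x) ^ (ν - 1) * (y / x)) * x := by ring
        _ = (y / x) ^ ν * x := by rw [e3]
    have hne2 : x ^ 2 - y ^ 2 ≠ 0 := by nlinarith
    have hsimp : 1 - y ^ 2 / x ^ 2 = (x ^ 2 - y ^ 2) / x ^ 2 := by field_simp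
    rw [hsimp]
    have key : (y / x) ^ ν * ((x ^ 2 - y ^ 2) / (2 * x)) *
        (((y / x) ^ (1 - ν) - 1) / ((ν - 1) / 2 * ((x ^ 2 - y ^ 2) / x ^ 2)))
        = ((y / x) ^ ν * x * ((y / x) ^ (1 - ν) - 1)) / (ν - 1) := by
      field_simp
    have hnum : (y / x) ^ ν * x * ((y / x) ^ (1 - ν) - 1) = y - (y / x) ^ (ν - 1) * y := by
      linear_combination e2' + e3'
    rw [key, hnum]
    ring


theorem statement8 (ν a : ℝ) (hν : 0 < ν) (hν1 : ν < 1) (ha : 0 ≤ a)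
    (f : ℝ → ℝ) (hf : Measurable f) (x : ℝ) (hx : a < x) :
    besselLeft ν 1 a x f =
      1 / (ν - 1) * ∫ y in a..x, y * (1 - (y / x) ^ (ν - 1)) * f y := by
  have hx0 : 0 < x := lt_of_le_of_lt ha hx
  have hEq : Set.EqOn (fun y => besselKernelLeft ν 1 x y * f y)
      (fun y => 1 / (ν - 1) * (y * (1 - (y / x) ^ (ν - 1)) * f y)) (Set.uIcc a x) := by
    intro y hy
    rw [Set.uIcc_of_le hx.le] at hy
    have hy0 : 0 ≤ y := le_trans ha hy.1
    simp only
    rw [kernel_eq ν x y hν hν1 hx0 hy0 hy.2]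
    ring
  rw [besselLeft, intervalIntegral.integral_congr hEq,
    intervalIntegral.integral_const_mul,
    show (2:ℝ) * 1 = 2 by norm_num, Real.Gamma_two]
  norm_num
end

section
/- Let ν ≥ 0 and α > 0, and let f, g be measurable functions on (0,∞) such that the double integral ∫_0^∞ ∫_0^x |f(x)| y^ν ((x²−y²)/(2x))^{2α−1} |₂F₁(α+(ν−1)/2, α; 2α; 1−y²/x²)| |g(y)| dy dx is finite. Then the integration-by-parts formula holds: ∫_0^∞ f(x) (B_{ν,0+}^{-α} g)(x) x^ν dx = ∫_0^∞ g(x) (B_{ν,-}^{-α} f)(x) x^ν dx. -/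
open MeasureTheory Real Set Filter

open scoped ENNReal NNReal

/-- Measurability of `x ^ q` (real power). -/
lemma measurable_rpow_const' (q : ℝ) : Measurable fun x : ℝ => x ^ q := by
  have hdef : (fun x : ℝ => x ^ q) = fun x =>
      if x = 0 then (if q = 0 then 1 else 0)
      else Real.exp (Real.log x * q) * if 0 < x then 1 else Real.cos (q * π) := by
    funext x
    rcases lt_trichotomy x 0 with h | h | h
    · rw [Real.rpow_def_of_neg h, if_neg h.ne, if_neg (not_lt.mpr h.le)]
    · subst h
      rw [if_pos rfl]
      by_cases hq : q = 0
      · subst hq; simp [Real.rpow_zero]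
      · rw [Real.zero_rpow hq, if_neg hq]
    · rw [Real.rpow_def_of_pos h, if_neg h.ne', if_pos h, mul_one]
  rw [hdef]
  refine Measurable.ite ?_ measurable_const ?_
  · exact measurableSet_eq
  · refine (Real.measurable_exp.comp (Real.measurable_log.mul_const q)).mul ?_
    exact Measurable.ite measurableSet_Ioi measurable_const measurable_const

set_option maxHeartbeats 1000000 in
/-- A pointwise `tsum` of measurable real functions is measurable. -/
lemma measurable_tsum_real {α : Type*} [MeasurableSpace α] {f : ℕ → α → ℝ}
    (hf : ∀ i, Measurable (f i)) : Measurable fun x => ∑' i, f i x := by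
  set T : Set α := {x | Summable fun i => f i x} with hTdef
  have hTm : MeasurableSet T := by
    have hmeas : Measurable fun x => ∑' i, (‖f i x‖₊ : ℝ≥0∞) :=
      Measurable.ennreal_tsum fun i => (hf i).nnnorm.coe_nnreal_ennreal
    have hTeq : T = (fun x => ∑' i, (‖f i x‖₊ : ℝ≥0∞)) ⁻¹' ({⊤}ᶜ) := by
      ext x
      simp only [hTdef, mem_setOf_eq, mem_preimage, mem_compl_iff, mem_singleton_iff]
      rw [← Ne.eq_def, ENNReal.tsum_coe_ne_top_iff_summable]
      constructor
      · intro h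
        have h1 : Summable fun i => |f i x| := h.abs
        have h2 : Summable fun i => (‖f i x‖₊ : ℝ) := by
          simpa [coe_nnnorm, Real.norm_eq_abs] using h1
        exact NNReal.summable_coe.1 h2
      · intro h
        have h2 : Summable fun i => (‖f i x‖₊ : ℝ) := NNReal.summable_coe.2 h
        have h1 : Summable fun i => |f i x| := by
          simpa [coe_nnnorm, Real.norm_eq_abs] using h2
        exact summable_abs_iff.1 h1
    rw [hTeq]
    exact hmeas (measurableSet_singleton ⊤).compl
  have hpart : ∀ n, Measurable fun x => ∑ i ∈ Finset.range n, f i x :=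
    fun n => Finset.measurable_sum _ fun i _ => hf i
  have hlim : Tendsto (fun n => T.indicator fun x => ∑ i ∈ Finset.range n, f i x) atTop
      (nhds (T.indicator fun x => ∑' i, f i x)) := by
    rw [tendsto_pi_nhds]
    intro x
    by_cases hx : x ∈ T
    · simp only [indicator_of_mem hx]
      exact hx.hasSum.tendsto_sum_nat
    · simp only [indicator_of_notMem hx]
      exact tendsto_const_nhds
  have hmeas2 : Measurable (T.indicator fun x => ∑' i, f i x) :=
    measurable_of_tendsto_metrizable (fun n => (hpart n).indicator hTm) hlim
  have heq : (fun x => ∑' i, f i x) = T.indicator fun x => ∑' i, f i x := by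
    funext x
    by_cases hx : x ∈ T
    · rw [indicator_of_mem hx]
    · rw [indicator_of_notMem hx, tsum_eq_zero_of_not_summable hx]
  rw [heq]; exact hmeas2

lemma measurable_hyp2F1 (a b c : ℝ) : Measurable fun z : ℝ => hyp2F1 a b c z := by
  unfold hyp2F1
  exact measurable_tsum_real fun k => (measurable_id.pow_const k).const_mul _

theorem statement14 (ν α : ℝ) (hν : 0 ≤ ν) (hα : 0 < α)
    (f g : ℝ → ℝ) (hf : Measurable f) (hg : Measurable g)
    (hint : MeasureTheory.IntegrableOn
      (fun p : ℝ × ℝ => |f p.1| * p.2 ^ ν *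
        ((p.1 ^ 2 - p.2 ^ 2) / (2 * p.1)) ^ (2 * α - 1) *
        |hyp2F1 (α + (ν - 1) / 2) α (2 * α) (1 - p.2 ^ 2 / p.1 ^ 2)| * |g p.2|)
      {p : ℝ × ℝ | 0 < p.2 ∧ p.2 < p.1}) :
    ∫ x in Set.Ioi (0 : ℝ), f x * besselLeft ν α 0 x g * x ^ ν =
      ∫ x in Set.Ioi (0 : ℝ), g x * besselRightInf ν α x f * x ^ ν := by
  have hΓ : 0 < Real.Gamma (2 * α) := Real.Gamma_pos_of_pos (by linarith)
  set c : ℝ := 1 / Real.Gamma (2 * α) with hc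
  have hc0 : 0 < c := by positivity
  set s : Set (ℝ × ℝ) := {p : ℝ × ℝ | 0 < p.2 ∧ p.2 < p.1} with hsdef
  have hs : MeasurableSet s :=
    (measurableSet_lt measurable_const measurable_snd).inter
      (measurableSet_lt measurable_snd measurable_fst)
  set H : ℝ × ℝ → ℝ := fun p =>
    (f p.1 * p.1 ^ ν * c) * (besselKernelLeft ν α p.1 p.2 * g p.2) with hHdef
  have hHmeas : Measurable H := by
    apply Measurable.mul
    · exact ((hf.comp measurable_fst).mul
        ((measurable_rpow_const' ν).comp measurable_fst)).mul measurable_const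
    · apply Measurable.mul _ (hg.comp measurable_snd)
      apply Measurable.mul
      · apply Measurable.mul
        · exact (measurable_rpow_const' ν).comp (measurable_snd.div measurable_fst)
        · exact (measurable_rpow_const' (2 * α - 1)).comp
            (((measurable_fst.pow_const 2).sub (measurable_snd.pow_const 2)).div
              (measurable_const.mul measurable_fst))
      · exact (measurable_hyp2F1 _ _ _).comp
          (measurable_const.sub ((measurable_snd.pow_const 2).div (measurable_fst.pow_const 2)))
  have hbound : ∀ p ∈ s, ‖H p‖ ≤ c * (|f p.1| * p.2 ^ ν *
      ((p.1 ^ 2 - p.2 ^ 2) / (2 * p.1)) ^ (2 * α - 1) *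
      |hyp2F1 (α + (ν - 1) / 2) α (2 * α) (1 - p.2 ^ 2 / p.1 ^ 2)| * |g p.2|) := by
    rintro ⟨x, y⟩ ⟨hy, hyx⟩
    dsimp only at hy hyx ⊢
    have hx : 0 < x := hy.trans hyx
    have hP : (0:ℝ) ≤ ((x ^ 2 - y ^ 2) / (2 * x)) ^ (2 * α - 1) := by
      apply Real.rpow_nonneg
      have h2 : y ^ 2 < x ^ 2 := by nlinarith
      apply div_nonneg (by linarith) (by linarith)
    have hxν : (0:ℝ) < x ^ ν := Real.rpow_pos_of_pos hx ν
    have hdivν : (y / x) ^ ν * x ^ ν = y ^ ν := by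
      rw [Real.div_rpow hy.le hx.le, div_mul_cancel₀ _ (ne_of_gt hxν)]
    have e1 : ‖H (x, y)‖ = |f x| * x ^ ν * c *
        ((y / x) ^ ν * ((x ^ 2 - y ^ 2) / (2 * x)) ^ (2 * α - 1) *
          |hyp2F1 (α + (ν - 1) / 2) α (2 * α) (1 - y ^ 2 / x ^ 2)| * |g y|) := by
      simp only [hHdef, besselKernelLeft, Real.norm_eq_abs, abs_mul]
      rw [abs_of_nonneg hxν.le, abs_of_nonneg hc0.le,
        abs_of_nonneg (Real.rpow_nonneg (div_nonneg hy.le hx.le) ν), abs_of_nonneg hP]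
      try ring
    rw [e1, ← hdivν]
    apply le_of_eq
    ring
  have hHs : IntegrableOn H s := by
    refine Integrable.mono' (hint.const_mul c) hHmeas.aestronglyMeasurable ?_
    exact (ae_restrict_iff' hs).2 (ae_of_all _ hbound)
  set G : ℝ × ℝ → ℝ := s.indicator H with hGdef
  have hG : Integrable G := (integrable_indicator_iff hs).2 hHs
  have hGprod : Integrable (Function.uncurry fun x y => G (x, y))
      ((volume : Measure ℝ).prod (volume : Measure ℝ)) := by
    have h1 : (Function.uncurry fun x y => G (x, y)) = G := rfl
    rw [h1, ← Measure.volume_eq_prod]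
    exact hG
  -- Left side
  have hLeft : ∀ x ∈ Ioi (0:ℝ), f x * besselLeft ν α 0 x g * x ^ ν = ∫ y, G (x, y) := by
    intro x hx
    have hx0 : (0:ℝ) < x := hx
    have slice : (fun y => G (x, y)) = (Ioo (0:ℝ) x).indicator (fun y => H (x, y)) := by
      funext y
      by_cases hy : y ∈ Ioo (0:ℝ) x
      · rw [indicator_of_mem hy]
        exact indicator_of_mem (show (x, y) ∈ s from ⟨hy.1, hy.2⟩) H
      · rw [indicator_of_notMem hy]
        exact indicator_of_notMem (fun hmem => hy ⟨hmem.1, hmem.2⟩) H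
    calc f x * besselLeft ν α 0 x g * x ^ ν
        = (f x * x ^ ν * c) * ∫ y in (0:ℝ)..x, besselKernelLeft ν α x y * g y := by
          simp only [besselLeft, ← hc]; ring
      _ = ∫ y in (0:ℝ)..x, (f x * x ^ ν * c) * (besselKernelLeft ν α x y * g y) :=
          (intervalIntegral.integral_const_mul _ _).symm
      _ = ∫ y in Ioc (0:ℝ) x, H (x, y) := by
          rw [intervalIntegral.integral_of_le hx0.le]
      _ = ∫ y in Ioo (0:ℝ) x, H (x, y) := integral_Ioc_eq_integral_Ioo
      _ = ∫ y, G (x, y) := by rw [slice, integral_indicator measurableSet_Ioo]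
  -- Right side
  have hRight : ∀ y ∈ Ioi (0:ℝ), (∫ x, G (x, y)) = g y * besselRightInf ν α y f * y ^ ν := by
    intro y hy
    have hy0 : (0:ℝ) < y := hy
    have slice : (fun x => G (x, y)) = (Ioi y).indicator (fun x => H (x, y)) := by
      funext x
      by_cases hx : x ∈ Ioi y
      · rw [indicator_of_mem hx]
        exact indicator_of_mem (show (x, y) ∈ s from ⟨hy0, hx⟩) H
      · rw [indicator_of_notMem hx]
        exact indicator_of_notMem (fun hmem => hx hmem.2) H
    calc (∫ x, G (x, y))
        = ∫ x in Ioi y, H (x, y) := by rw [slice, integral_indicator measurableSet_Ioi]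
      _ = ∫ x in Ioi y, (g y * y ^ ν * c) * (besselKernelRight ν α y x * f x) := by
          apply setIntegral_congr_fun measurableSet_Ioi
          intro x hx
          have hyx : y < x := hx
          have hx0 : 0 < x := hy0.trans hyx
          have hxν : (0:ℝ) < x ^ ν := Real.rpow_pos_of_pos hx0 ν
          simp only [hHdef, besselKernelLeft, besselKernelRight]
          rw [Real.div_rpow hy0.le hx0.le]
          have hne : x ^ ν ≠ 0 := hxν.ne'
          field_simp
      _ = (g y * y ^ ν * c) * ∫ x in Ioi y, besselKernelRight ν α y x * f x :=
          integral_const_mul _ _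
      _ = g y * besselRightInf ν α y f * y ^ ν := by
          simp only [besselRightInf, ← hc]; ring
  -- zero off the positive axis
  have hzero1 : ∀ x : ℝ, x ∉ Ioi (0:ℝ) → (∫ y, G (x, y)) = 0 := by
    intro x hx
    have h1 : (fun y => G (x, y)) = fun _ => (0:ℝ) := by
      funext y
      exact indicator_of_notMem (fun hmem => hx (lt_trans hmem.1 hmem.2)) H
    rw [h1, integral_zero]
  have hzero2 : ∀ y : ℝ, y ∉ Ioi (0:ℝ) → (∫ x, G (x, y)) = 0 := by
    intro y hy
    have h1 : (fun x => G (x, y)) = fun _ => (0:ℝ) := by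
      funext x
      exact indicator_of_notMem (fun hmem => hy hmem.1) H
    rw [h1, integral_zero]
  calc ∫ x in Ioi (0:ℝ), f x * besselLeft ν α 0 x g * x ^ ν
      = ∫ x in Ioi (0:ℝ), ∫ y, G (x, y) := setIntegral_congr_fun measurableSet_Ioi hLeft
    _ = ∫ x, ∫ y, G (x, y) := by
        rw [← integral_indicator measurableSet_Ioi]
        congr 1
        funext x
        by_cases hx : x ∈ Ioi (0:ℝ)
        · rw [indicator_of_mem hx]
        · rw [indicator_of_notMem hx, hzero1 x hx]
    _ = ∫ y, ∫ x, G (x, y) := integral_integral_swap hGprod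
    _ = ∫ y in Ioi (0:ℝ), ∫ x, G (x, y) := by
        rw [← integral_indicator measurableSet_Ioi]
        congr 1
        funext y
        by_cases hy : y ∈ Ioi (0:ℝ)
        · rw [indicator_of_mem hy]
        · rw [indicator_of_notMem hy, hzero2 y hy]
    _ = ∫ y in Ioi (0:ℝ), g y * besselRightInf ν α y f * y ^ ν :=
        setIntegral_congr_fun measurableSet_Ioi hRight
end
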